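/- Fix a, ε > 0. The function x ↦ Φ(a, ε, x) is strictly increasing and strictly convex on [0, aε), and Φ(a, ε, 0) = 0. -/

import Mathlib

noncomputable section

/-- The two-level entropy functional
`Φ(a,ε,x) = λ₊ log λ₊ + λ₋ log λ₋ − a log a − ε log ε`, where
`λ± = (a + ε ± √((a−ε)² + 4x))/2` (with `0 log 0 = 0` via `Real.log 0 = 0`). -/
def Phi (a ε x : ℝ) : ℝ :=
  ((a + ε + Real.sqrt ((a - ε) ^ 2 + 4 * x)) / 2) *
      Real.log ((a + ε + Real.sqrt ((a - ε) ^ 2 + 4 * x)) / 2) +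
    ((a + ε - Real.sqrt ((a - ε) ^ 2 + 4 * x)) / 2) *
      Real.log ((a + ε - Real.sqrt ((a - ε) ^ 2 + 4 * x)) / 2) -
    a * Real.log a - ε * Real.log ε

namespace PhiAux

/-- `r(x) = √((a−ε)² + 4x)` -/
def rr (a ε x : ℝ) : ℝ := Real.sqrt ((a - ε) ^ 2 + 4 * x)

/-- `λ₊` -/
def lp (a ε x : ℝ) : ℝ := (a + ε + rr a ε x) / 2

/-- `λ₋` -/
def lm (a ε x : ℝ) : ℝ := (a + ε - rr a ε x) / 2

/-- First derivative of `Phi a ε`. -/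
def PhiD (a ε x : ℝ) : ℝ := (Real.log (lp a ε x) - Real.log (lm a ε x)) / rr a ε x

/-- Second derivative of `Phi a ε`. -/
def PhiD2 (a ε x : ℝ) : ℝ :=
  ((1 / rr a ε x / lp a ε x + 1 / rr a ε x / lm a ε x) * rr a ε x -
      (Real.log (lp a ε x) - Real.log (lm a ε x)) * (2 / rr a ε x)) / rr a ε x ^ 2

variable {a ε x : ℝ}

lemma rr_nonneg : 0 ≤ rr a ε x := Real.sqrt_nonneg _

lemma rr_pos (hx : 0 < x) : 0 < rr a ε x :=
  Real.sqrt_pos.mpr (by positivity)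

lemma rr_lt (ha : 0 < a) (hε : 0 < ε) (hx0 : 0 ≤ x) (hx : x < a * ε) : rr a ε x < a + ε := by
  have h1 : (a - ε) ^ 2 + 4 * x < (a + ε) ^ 2 := by nlinarith
  have := Real.sqrt_lt_sqrt (by positivity : (0:ℝ) ≤ (a - ε) ^ 2 + 4 * x) h1
  rwa [Real.sqrt_sq (by linarith : (0:ℝ) ≤ a + ε)] at this

lemma lm_pos (ha : 0 < a) (hε : 0 < ε) (hx0 : 0 ≤ x) (hx : x < a * ε) : 0 < lm a ε x := by
  have := rr_lt ha hε hx0 hx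
  unfold lm; linarith

lemma lp_pos (ha : 0 < a) (hε : 0 < ε) : 0 < lp a ε x := by
  have := rr_nonneg (a := a) (ε := ε) (x := x)
  unfold lp; linarith

lemma lm_lt_lp (hx : 0 < x) : lm a ε x < lp a ε x := by
  have := rr_pos (a := a) (ε := ε) hx
  unfold lp lm; linarith

lemma lp_sub_lm : lp a ε x - lm a ε x = rr a ε x := by unfold lp lm; ring

lemma hasDerivAt_rr (hx : 0 < x) : HasDerivAt (rr a ε) (2 / rr a ε x) x := by
  have hinner : (0:ℝ) < (a - ε) ^ 2 + 4 * x := by positivity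
  have h1 : HasDerivAt (fun y : ℝ => (a - ε) ^ 2 + 4 * y) 4 x := by
    simpa using ((hasDerivAt_id x).const_mul 4).const_add ((a - ε) ^ 2)
  have h2 := (Real.hasDerivAt_sqrt hinner.ne').comp x h1
  replace h2 : HasDerivAt (rr a ε) _ x := h2
  convert h2 using 1
  have : Real.sqrt ((a - ε) ^ 2 + 4 * x) ≠ 0 := (rr_pos hx).ne'
  unfold rr
  field_simp [rr]
  ring

lemma hasDerivAt_lp (hx : 0 < x) : HasDerivAt (lp a ε) (1 / rr a ε x) x := by
  have h : HasDerivAt (fun y => (a + ε + rr a ε y) / 2) (2 / rr a ε x / 2) x :=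
    ((hasDerivAt_rr hx).const_add (a + ε)).div_const 2
  convert h using 1
  · rfl
  have : rr a ε x ≠ 0 := (rr_pos hx).ne'
  field_simp

lemma hasDerivAt_lm (hx : 0 < x) : HasDerivAt (lm a ε) (-(1 / rr a ε x)) x := by
  have h : HasDerivAt (fun y => (a + ε - rr a ε y) / 2) (-(2 / rr a ε x) / 2) x :=
    ((hasDerivAt_rr hx).const_sub (a + ε)).div_const 2
  convert h using 1
  · rfl
  have : rr a ε x ≠ 0 := (rr_pos hx).ne'
  field_simp

lemma Phi_eq : Phi a ε x =
    lp a ε x * Real.log (lp a ε x) + lm a ε x * Real.log (lm a ε x)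
      - a * Real.log a - ε * Real.log ε := rfl

lemma hasDerivAt_Phi (ha : 0 < a) (hε : 0 < ε) (hx : 0 < x) (hx' : x < a * ε) :
    HasDerivAt (Phi a ε) (PhiD a ε x) x := by
  have hr : rr a ε x ≠ 0 := (rr_pos hx).ne'
  have hlp : lp a ε x ≠ 0 := (lp_pos ha hε).ne'
  have hlm : lm a ε x ≠ 0 := (lm_pos ha hε hx.le hx').ne'
  have h1 : HasDerivAt (fun y => lp a ε y * Real.log (lp a ε y))
      (1 / rr a ε x * Real.log (lp a ε x) + lp a ε x * (1 / rr a ε x / lp a ε x)) x :=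
    (hasDerivAt_lp hx).mul ((hasDerivAt_lp hx).log hlp)
  have h2 : HasDerivAt (fun y => lm a ε y * Real.log (lm a ε y))
      (-(1 / rr a ε x) * Real.log (lm a ε x) + lm a ε x * (-(1 / rr a ε x) / lm a ε x)) x :=
    (hasDerivAt_lm hx).mul ((hasDerivAt_lm hx).log hlm)
  have h3 := ((h1.add h2).sub_const (a * Real.log a)).sub_const (ε * Real.log ε)
  have hfun : (fun y => lp a ε y * Real.log (lp a ε y) + lm a ε y * Real.log (lm a ε y)
      - a * Real.log a - ε * Real.log ε) = Phi a ε := rfl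
  replace h3 : HasDerivAt (Phi a ε) _ x := h3
  convert h3 using 1
  unfold PhiD
  field_simp
  ring

lemma PhiD_pos (ha : 0 < a) (hε : 0 < ε) (hx : 0 < x) (hx' : x < a * ε) :
    0 < PhiD a ε x := by
  have h1 : Real.log (lm a ε x) < Real.log (lp a ε x) :=
    Real.log_lt_log (lm_pos ha hε hx.le hx') (lm_lt_lp hx)
  exact div_pos (by linarith) (rr_pos hx)

lemma hasDerivAt_PhiD (ha : 0 < a) (hε : 0 < ε) (hx : 0 < x) (hx' : x < a * ε) :
    HasDerivAt (PhiD a ε) (PhiD2 a ε x) x := by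
  have hr : rr a ε x ≠ 0 := (rr_pos hx).ne'
  have hlp : lp a ε x ≠ 0 := (lp_pos ha hε).ne'
  have hlm : lm a ε x ≠ 0 := (lm_pos ha hε hx.le hx').ne'
  have hN : HasDerivAt (fun y => Real.log (lp a ε y) - Real.log (lm a ε y))
      (1 / rr a ε x / lp a ε x - -(1 / rr a ε x) / lm a ε x) x :=
    ((hasDerivAt_lp hx).log hlp).sub ((hasDerivAt_lm hx).log hlm)
  have h := hN.div (hasDerivAt_rr hx) hr
  replace h : HasDerivAt (PhiD a ε) _ x := h
  convert h using 1
  unfold PhiD2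
  congr 1
  ring

lemma key_ineq {t : ℝ} (ht : 1 < t) : 2 * Real.log t < t - 1 / t := by
  have h0 : (0:ℝ) < t := by linarith
  have h := Real.self_lt_sinh_iff.mpr (Real.log_pos ht)
  rw [Real.sinh_eq, Real.exp_log h0, Real.exp_neg, Real.exp_log h0] at h
  rw [one_div]
  linarith

lemma PhiD2_pos (ha : 0 < a) (hε : 0 < ε) (hx : 0 < x) (hx' : x < a * ε) :
    0 < PhiD2 a ε x := by
  set u := lp a ε x with hu
  set v := lm a ε x with hv
  set r := rr a ε x with hrdef
  have hr : 0 < r := rr_pos hx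
  have hvpos : 0 < v := lm_pos ha hε hx.le hx'
  have hupos : 0 < u := lp_pos ha hε
  have hvu : v < u := lm_lt_lp hx
  have hsub : u - v = r := lp_sub_lm
  have ht : 1 < u / v := (one_lt_div hvpos).mpr hvu
  have hkey := key_ineq ht
  have hlog : Real.log (u / v) = Real.log u - Real.log v :=
    Real.log_div hupos.ne' hvpos.ne'
  rw [hlog] at hkey
  have hident : u / v - 1 / (u / v) = r * (1 / u + 1 / v) := by
    rw [← hsub]; field_simp; ring
  rw [hident] at hkey
  unfold PhiD2
  rw [← hu, ← hv, ← hrdef]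
  apply div_pos _ (by positivity)
  have hexp : (1 / r / u + 1 / r / v) * r - (Real.log u - Real.log v) * (2 / r)
      = (r * (1 / u + 1 / v) - 2 * (Real.log u - Real.log v)) / r := by
    field_simp
  rw [hexp]
  apply div_pos _ hr
  linarith

lemma continuousOn_Phi (ha : 0 < a) (hε : 0 < ε) :
    ContinuousOn (Phi a ε) (Set.Ico 0 (a * ε)) := by
  have hrr : Continuous (rr a ε) := by
    unfold rr; fun_prop
  have hlp : Continuous (lp a ε) := by
    unfold lp; fun_prop
  have hlm : Continuous (lm a ε) := by
    unfold lm; fun_prop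
  have hlpne : ∀ y ∈ Set.Ico 0 (a * ε), lp a ε y ≠ 0 := fun y _ => (lp_pos ha hε).ne'
  have hlmne : ∀ y ∈ Set.Ico 0 (a * ε), lm a ε y ≠ 0 := fun y hy =>
    (lm_pos ha hε hy.1 hy.2).ne'
  have h1 : ContinuousOn (fun y => lp a ε y * Real.log (lp a ε y)) (Set.Ico 0 (a * ε)) :=
    hlp.continuousOn.mul (hlp.continuousOn.log hlpne)
  have h2 : ContinuousOn (fun y => lm a ε y * Real.log (lm a ε y)) (Set.Ico 0 (a * ε)) :=
    hlm.continuousOn.mul (hlm.continuousOn.log hlmne)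
  have : ContinuousOn (fun y => lp a ε y * Real.log (lp a ε y)
      + lm a ε y * Real.log (lm a ε y) - a * Real.log a - ε * Real.log ε)
      (Set.Ico 0 (a * ε)) := ((h1.add h2).sub continuousOn_const).sub continuousOn_const
  exact this

end PhiAux

open PhiAux in
/-- `x ↦ Φ(a,ε,x)` is strictly increasing and strictly convex on `[0, aε)`,
with `Φ(a,ε,0) = 0`. -/
theorem Phi_strictMono_strictConvex (a ε : ℝ) (ha : 0 < a) (hε : 0 < ε) :
    StrictMonoOn (Phi a ε) (Set.Ico 0 (a * ε)) ∧
      StrictConvexOn ℝ (Set.Ico 0 (a * ε)) (Phi a ε) ∧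
      Phi a ε 0 = 0 := by
  have hconv : Convex ℝ (Set.Ico (0:ℝ) (a * ε)) := convex_Ico _ _
  have hcont := continuousOn_Phi (a := a) (ε := ε) ha hε
  have hint : interior (Set.Ico (0:ℝ) (a * ε)) = Set.Ioo 0 (a * ε) := interior_Ico
  refine ⟨?_, ?_, ?_⟩
  · apply strictMonoOn_of_deriv_pos hconv hcont
    intro x hx
    rw [hint] at hx
    rw [(hasDerivAt_Phi ha hε hx.1 hx.2).deriv]
    exact PhiD_pos ha hε hx.1 hx.2
  · apply strictConvexOn_of_deriv2_pos hconv hcont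
    intro x hx
    rw [hint] at hx
    have heq : Set.EqOn (deriv (Phi a ε)) (PhiD a ε) (Set.Ioo 0 (a * ε)) := fun y hy =>
      (hasDerivAt_Phi ha hε hy.1 hy.2).deriv
    have hev : deriv (Phi a ε) =ᶠ[nhds x] PhiD a ε :=
      Filter.eventuallyEq_of_mem (isOpen_Ioo.mem_nhds hx) heq
    show 0 < deriv^[2] (Phi a ε) x
    have : deriv^[2] (Phi a ε) x = deriv (deriv (Phi a ε)) x := rfl
    rw [this, hev.deriv_eq, (hasDerivAt_PhiD ha hε hx.1 hx.2).deriv]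
    exact PhiD2_pos ha hε hx.1 hx.2
  · have hs : Real.sqrt ((a - ε) ^ 2 + 4 * 0) = |a - ε| := by
      rw [mul_zero, add_zero, Real.sqrt_sq_eq_abs]
    unfold Phi
    rw [hs]
    rcases le_total ε a with h | h
    · rw [abs_of_nonneg (by linarith)]
      have e1 : (a + ε + (a - ε)) / 2 = a := by ring
      have e2 : (a + ε - (a - ε)) / 2 = ε := by ring
      rw [e1, e2]; ring
    · rw [abs_of_nonpos (by linarith)]
      have e1 : (a + ε + -(a - ε)) / 2 = ε := by ring
      have e2 : (a + ε - -(a - ε)) / 2 = a := by ring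
      rw [e1, e2]; ring
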